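/- In the coordinate-wise dual averaging setup (convex $f$, $x_k = x_0 - A_k^{-1}s_k$ with $A_k$ positive definite diagonal and non-decreasing in the semidefinite order, $s_{k+1}=s_k+\lambda_k g_k$ with $g_k\in\partial f(x_k)$, $\lambda_k>0$), if $s_{n+1}\neq 0$ then $D_\infty = \|x_0-x_*\|_\infty \geq \frac{\|s_{n+1}\|_{A_{n+1}^{-1}}^2 - \sum_{k=0}^{n}\lambda_k^2\|g_k\|_{A_k^{-1}}^2}{2\|s_{n+1}\|_1}$. -/
import Mathlib


open Finset Matrix

theorem stmt11 (p n : ℕ) (f : (Fin p → ℝ) → ℝ)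
    (hconv : ConvexOn ℝ Set.univ f)
    (xstar x0 : Fin p → ℝ)
    (hmin : ∀ y, f xstar ≤ f y)
    (g s x : ℕ → Fin p → ℝ) (lam : ℕ → ℝ)
    (hlam : ∀ k, 0 < lam k)
    (a : ℕ → Fin p → ℝ)
    (ha : ∀ k i, 0 < a k i)
    (hamono : ∀ k i, a k i ≤ a (k + 1) i)
    (A : ℕ → Matrix (Fin p) (Fin p) ℝ)
    (hAdiag : ∀ k, A k = Matrix.diagonal (a k))
    (hs0 : s 0 = 0) (hs : ∀ k, s (k + 1) = s k + lam k • g k)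
    (hx : ∀ k, x k = x0 - (A k)⁻¹ *ᵥ s k)
    (hsubgrad : ∀ k, ∀ y, f (x k) + g k ⬝ᵥ (y - x k) ≤ f y)
    (hsne : s (n + 1) ≠ 0) :
    ((s (n + 1) ⬝ᵥ ((A (n + 1))⁻¹ *ᵥ s (n + 1)))
        - ∑ k ∈ range (n + 1), (lam k) ^ 2 * (g k ⬝ᵥ ((A k)⁻¹ *ᵥ g k)))
      / (2 * ∑ i, |s (n + 1) i|)
      ≤ ‖x0 - xstar‖ := by
  have hinv : ∀ k, (A k)⁻¹ = Matrix.diagonal (fun i => (a k i)⁻¹) := by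
    intro k
    apply Matrix.inv_eq_right_inv
    rw [hAdiag, Matrix.diagonal_mul_diagonal]
    have h1 : (fun i => a k i * (a k i)⁻¹) = fun _ : Fin p => (1:ℝ) := by
      funext i
      exact mul_inv_cancel₀ (ha k i).ne'
    rw [h1]
    exact Matrix.diagonal_one
  have hdot : ∀ k (v w : Fin p → ℝ),
      v ⬝ᵥ ((A k)⁻¹ *ᵥ w) = ∑ i, v i * w i / a k i := by
    intro k v w
    rw [hinv]
    simp only [dotProduct, Matrix.mulVec_diagonal]
    exact Finset.sum_congr rfl fun i _ => by rw [div_eq_mul_inv]; ring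
  have key : ∀ m, s m ⬝ᵥ ((A m)⁻¹ *ᵥ s m)
      ≤ ∑ k ∈ range m, (lam k) ^ 2 * (g k ⬝ᵥ ((A k)⁻¹ *ᵥ g k))
        + 2 * (s m ⬝ᵥ (x0 - xstar)) := by
    intro m
    induction m with
    | zero => simp [hs0]
    | succ k ih =>
      have h1 : s (k+1) ⬝ᵥ ((A (k+1))⁻¹ *ᵥ s (k+1))
          ≤ s (k+1) ⬝ᵥ ((A k)⁻¹ *ᵥ s (k+1)) := by
        rw [hdot, hdot]
        apply Finset.sum_le_sum
        intro i _
        have h2 : (0:ℝ) ≤ s (k+1) i * s (k+1) i := mul_self_nonneg _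
        have := ha k i
        have := hamono k i
        gcongr
      have hexp : s (k+1) ⬝ᵥ ((A k)⁻¹ *ᵥ s (k+1))
          = s k ⬝ᵥ ((A k)⁻¹ *ᵥ s k)
            + 2 * lam k * (g k ⬝ᵥ ((A k)⁻¹ *ᵥ s k))
            + (lam k) ^ 2 * (g k ⬝ᵥ ((A k)⁻¹ *ᵥ g k)) := by
        simp only [hdot, hs k, Pi.add_apply, Pi.smul_apply, smul_eq_mul,
          Finset.mul_sum, ← Finset.sum_add_distrib]
        apply Finset.sum_congr rfl
        intro i _
        have := (ha k i).ne'
        field_simp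
        ring
      have h5 : (A k)⁻¹ *ᵥ s k = x0 - x k := by
        rw [hx k]; abel
      have hgrad : g k ⬝ᵥ ((A k)⁻¹ *ᵥ s k) ≤ g k ⬝ᵥ (x0 - xstar) := by
        have h2 := hsubgrad k xstar
        have h3 := hmin (x k)
        have h4 : g k ⬝ᵥ (xstar - x k) ≤ 0 := by linarith
        have h6 : g k ⬝ᵥ ((A k)⁻¹ *ᵥ s k)
            = g k ⬝ᵥ (x0 - xstar) + g k ⬝ᵥ (xstar - x k) := by
          rw [h5, ← dotProduct_add]
          congr 1
          abel
        linarith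
      have hsd : s (k+1) ⬝ᵥ (x0 - xstar)
          = s k ⬝ᵥ (x0 - xstar) + lam k * (g k ⬝ᵥ (x0 - xstar)) := by
        rw [hs k, add_dotProduct, smul_dotProduct]
        simp
      have hmul : 2 * lam k * (g k ⬝ᵥ ((A k)⁻¹ *ᵥ s k))
          ≤ 2 * lam k * (g k ⬝ᵥ (x0 - xstar)) := by
        apply mul_le_mul_of_nonneg_left hgrad
        have := hlam k
        linarith
      rw [Finset.sum_range_succ]
      linarith
  have hDi : ∀ i, s (n+1) i * (x0 - xstar) i ≤ |s (n+1) i| * ‖x0 - xstar‖ := by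
    intro i
    calc s (n+1) i * (x0 - xstar) i ≤ |s (n+1) i * (x0 - xstar) i| := le_abs_self _
    _ = |s (n+1) i| * |(x0 - xstar) i| := abs_mul _ _
    _ ≤ |s (n+1) i| * ‖x0 - xstar‖ := by
        apply mul_le_mul_of_nonneg_left _ (abs_nonneg _)
        exact (norm_le_pi_norm (x0 - xstar) i)
  have hineq : s (n+1) ⬝ᵥ (x0 - xstar) ≤ (∑ i, |s (n+1) i|) * ‖x0 - xstar‖ := by
    rw [dotProduct, Finset.sum_mul]
    exact Finset.sum_le_sum fun i _ => hDi i
  have hpos : 0 < ∑ i, |s (n+1) i| := by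
    obtain ⟨i, hi⟩ := Function.ne_iff.mp hsne
    exact Finset.sum_pos' (fun i _ => abs_nonneg _)
      ⟨i, Finset.mem_univ i, abs_pos.mpr hi⟩
  rw [div_le_iff₀ (by positivity)]
  have := key (n+1)
  nlinarith [this, hineq, hpos]
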